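/- For all real u > 1 and v > 0 with uv·log u > 0, the series Σ_{r=2}^∞ exp(−u^r v) converges and is bounded above by exp(−u v) / (u v log u). -/
import Mathlib


open Real

theorem series_exp_pow_estimate (u v : ℝ) (hu : 1 < u) (hv : 0 < v)
    (hpos : 0 < u * v * log u) :
    Summable (fun r : ℕ => exp (-(u ^ (r + 2) * v))) ∧
    ∑' r : ℕ, exp (-(u ^ (r + 2) * v)) ≤ exp (-(u * v)) / (u * v * log u) := by
  set a : ℝ := u * v * log u with ha
  set q : ℝ := exp (-a) with hq
  have hq0 : 0 < q := exp_pos _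
  have hq1 : q < 1 := by
    rw [hq, exp_lt_one_iff]
    linarith
  have hu0 : (0:ℝ) < u := by linarith
  -- key pointwise bound
  have key : ∀ r : ℕ, exp (-(u ^ (r + 2) * v)) ≤ exp (-(u * v)) * q ^ (r + 1) := by
    intro r
    have h1 : ((r:ℝ) + 1) * log u + 1 ≤ u ^ (r + 1) := by
      have := Real.add_one_le_exp (((r:ℝ) + 1) * log u)
      calc ((r:ℝ) + 1) * log u + 1 ≤ exp (((r:ℝ) + 1) * log u) := this
        _ = exp (log u) ^ (r + 1) := by
            rw [← Real.exp_nat_mul]; push_cast; ring_nf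
        _ = u ^ (r + 1) := by rw [Real.exp_log hu0]
    have h2 : u * v + ((r:ℝ) + 1) * a ≤ u ^ (r + 2) * v := by
      have h3 : u * v * (((r:ℝ) + 1) * log u + 1) ≤ u * v * u ^ (r + 1) := by
        apply mul_le_mul_of_nonneg_left h1 (by positivity)
      have h4 : u * v * u ^ (r + 1) = u ^ (r + 2) * v := by ring
      nlinarith
    rw [hq, ← Real.exp_nat_mul]
    rw [← Real.exp_add]
    apply Real.exp_le_exp.2
    push_cast
    nlinarith
  have hgeo : Summable (fun r : ℕ => exp (-(u * v)) * q ^ (r + 1)) := by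
    apply Summable.mul_left
    exact (summable_geometric_of_lt_one hq0.le hq1).comp_injective (add_left_injective 1)
  have hsum : Summable (fun r : ℕ => exp (-(u ^ (r + 2) * v))) := by
    apply Summable.of_nonneg_of_le (fun r => (exp_pos _).le) key hgeo
  refine ⟨hsum, ?_⟩
  have hle : ∑' r : ℕ, exp (-(u ^ (r + 2) * v)) ≤ ∑' r : ℕ, exp (-(u * v)) * q ^ (r + 1) :=
    Summable.tsum_le_tsum key hsum hgeo
  have hgval : ∑' r : ℕ, exp (-(u * v)) * q ^ (r + 1) = exp (-(u * v)) * (q / (1 - q)) := by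
    have : ∀ r : ℕ, exp (-(u * v)) * q ^ (r + 1) = (exp (-(u * v)) * q) * q ^ r := by
      intro r; ring
    simp_rw [this]
    rw [tsum_mul_left, tsum_geometric_of_lt_one hq0.le hq1]
    field_simp
  have hfinal : exp (-(u * v)) * (q / (1 - q)) ≤ exp (-(u * v)) / a := by
    rw [div_eq_mul_inv (exp (-(u*v)))]
    apply mul_le_mul_of_nonneg_left _ (exp_pos _).le
    have h1q : (0:ℝ) < 1 - q := by linarith
    have hE : a + 1 ≤ exp a := Real.add_one_le_exp a
    have hq' : q * exp a = 1 := by rw [hq, ← Real.exp_add]; simp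
    rw [div_le_iff₀ h1q, inv_mul_eq_div, le_div_iff₀ hpos]
    nlinarith [mul_le_mul_of_nonneg_right hE hq0.le]
  calc ∑' r : ℕ, exp (-(u ^ (r + 2) * v)) ≤ _ := hle
    _ = _ := hgval
    _ ≤ _ := hfinal
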